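/- The class of lattice path matroids is closed under matroid duality: if M = M[P,Q] is a lattice path matroid, then the dual matroid M* (whose bases are the complements in [m+r] of the bases of M) is isomorphic to a lattice path matroid, namely the one obtained by reflecting the bounding paths P and Q about the line y = x. -/

import Mathlib

/-- `B` is a transversal of the interval system `(N_j = [lo j, hi j])_{j : Fin r}`. -/
def IsTransLH (r : ℕ) (lo hi : Fin r → ℕ) (B : Finset ℕ) : Prop :=
  ∃ f : Fin r ↪ ℕ, (∀ j : Fin r, lo j ≤ f j ∧ f j ≤ hi j) ∧ Finset.univ.map f = B

lemma cnt_card {r : ℕ} (S : Finset ℕ) (h : S.card = r) (p : ℕ) :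
    ((Finset.univ : Finset (Fin r)).filter (fun j => (S.orderIsoOfFin h j : ℕ) ≤ p)).card
      = (S.filter (· ≤ p)).card := by
  have hinj : Function.Injective (fun j : Fin r => (S.orderIsoOfFin h j : ℕ)) :=
    fun a b hab => (S.orderIsoOfFin h).injective (Subtype.coe_injective hab)
  rw [← Finset.card_image_of_injective _ hinj]
  congr 1
  ext x
  simp only [Finset.mem_image, Finset.mem_filter, Finset.mem_univ, true_and]
  constructor
  · rintro ⟨j, hj, rfl⟩
    exact ⟨(S.orderIsoOfFin h j).2, hj⟩
  · rintro ⟨hx, hxp⟩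
    refine ⟨(S.orderIsoOfFin h).symm ⟨x, hx⟩, ?_, ?_⟩ <;> simp [hxp]

lemma le_iff_lt_cnt {r : ℕ} (S : Finset ℕ) (h : S.card = r) (i : Fin r) (p : ℕ) :
    (S.orderIsoOfFin h i : ℕ) ≤ p ↔ (i : ℕ) < (S.filter (· ≤ p)).card := by
  rw [← cnt_card S h p]
  constructor
  · intro hip
    have hsub : Finset.Iic i ⊆
        Finset.univ.filter (fun j => (S.orderIsoOfFin h j : ℕ) ≤ p) := by
      intro j hj
      simp only [Finset.mem_Iic] at hj
      simp only [Finset.mem_filter, Finset.mem_univ, true_and]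
      exact le_trans (by exact_mod_cast (S.orderIsoOfFin h).monotone hj) hip
    have := Finset.card_le_card hsub
    rw [Fin.card_Iic] at this
    omega
  · intro hlt
    by_contra hgt
    push_neg at hgt
    have hsub : Finset.univ.filter (fun j => (S.orderIsoOfFin h j : ℕ) ≤ p)
        ⊆ Finset.Iio i := by
      intro j hj
      simp only [Finset.mem_filter, Finset.mem_univ, true_and] at hj
      simp only [Finset.mem_Iio]
      by_contra hij
      push_neg at hij
      exact absurd (le_trans (by exact_mod_cast (S.orderIsoOfFin h).monotone hij) hj)
        (not_le.2 hgt)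
    have := Finset.card_le_card hsub
    rw [Fin.card_Iio] at this
    omega

lemma sorted_le_iff {r : ℕ} (S B : Finset ℕ) (hS : S.card = r) (hB : B.card = r) :
    (∀ i : Fin r, (S.orderIsoOfFin hS i : ℕ) ≤ (B.orderIsoOfFin hB i : ℕ)) ↔
    ∀ p : ℕ, (B.filter (· ≤ p)).card ≤ (S.filter (· ≤ p)).card := by
  constructor
  · intro hle p
    rw [← cnt_card S hS p, ← cnt_card B hB p]
    apply Finset.card_le_card
    intro j hj
    simp only [Finset.mem_filter, Finset.mem_univ, true_and] at hj ⊢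
    exact le_trans (hle j) hj
  · intro hc i
    have h1 : (i : ℕ) < (B.filter (· ≤ (B.orderIsoOfFin hB i : ℕ))).card :=
      (le_iff_lt_cnt B hB i _).1 le_rfl
    exact (le_iff_lt_cnt S hS i _).2 (lt_of_lt_of_le h1 (hc _))

lemma trans_iff {r : ℕ} (lo hi : Fin r → ℕ) (hlo : Monotone lo) (hhi : Monotone hi)
    (B : Finset ℕ) :
    IsTransLH r lo hi B ↔
      ∃ h : B.card = r, ∀ i : Fin r,
        lo i ≤ (B.orderIsoOfFin h i : ℕ) ∧ (B.orderIsoOfFin h i : ℕ) ≤ hi i := by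
  constructor
  · rintro ⟨f, hf, rfl⟩
    have hcard : (Finset.univ.map f).card = r := by simp
    refine ⟨hcard, fun i => ?_⟩
    set e := (Finset.univ.map f).orderIsoOfFin hcard with he
    have hcnt : ∀ p, ((Finset.univ.map f).filter (· ≤ p)).card
        = (Finset.univ.filter (fun j => f j ≤ p)).card := by
      intro p
      rw [Finset.filter_map, Finset.card_map]
      rfl
    constructor
    · by_contra hgt
      push_neg at hgt
      have h1 : (i : ℕ) < ((Finset.univ.map f).filter (· ≤ (e i : ℕ))).card :=
        (le_iff_lt_cnt _ hcard i _).1 le_rfl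
      have hsub : Finset.univ.filter (fun j => f j ≤ (e i : ℕ)) ⊆ Finset.Iio i := by
        intro j hj
        simp only [Finset.mem_filter, Finset.mem_univ, true_and] at hj
        simp only [Finset.mem_Iio]
        by_contra hij
        push_neg at hij
        exact absurd (le_trans (le_trans (hlo hij) (hf j).1) hj) (not_le.2 hgt)
      have := Finset.card_le_card hsub
      rw [Fin.card_Iio] at this
      rw [hcnt] at h1
      omega
    · rw [le_iff_lt_cnt _ hcard, hcnt]
      have hsub : Finset.Iic i ⊆ Finset.univ.filter (fun j => f j ≤ hi i) := by
        intro j hj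
        simp only [Finset.mem_Iic] at hj
        simp only [Finset.mem_filter, Finset.mem_univ, true_and]
        exact le_trans (hf j).2 (hhi hj)
      have := Finset.card_le_card hsub
      rw [Fin.card_Iic] at this
      omega
  · rintro ⟨h, hb⟩
    refine ⟨⟨fun i => (B.orderIsoOfFin h i : ℕ),
      fun a b hab => (B.orderIsoOfFin h).injective (Subtype.coe_injective hab)⟩,
      fun j => hb j, ?_⟩
    ext x
    simp only [Finset.mem_map, Finset.mem_univ, true_and, Function.Embedding.coeFn_mk]
    constructor
    · rintro ⟨j, rfl⟩
      exact (B.orderIsoOfFin h j).2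
    · intro hx
      exact ⟨(B.orderIsoOfFin h).symm ⟨x, hx⟩,
        congrArg Subtype.val ((B.orderIsoOfFin h).apply_symm_apply ⟨x, hx⟩)⟩

lemma trans_subset {r n : ℕ} {lo hi : Fin r → ℕ} (h1 : ∀ j, 1 ≤ lo j) (h2 : ∀ j, hi j ≤ n)
    {B : Finset ℕ} (hB : IsTransLH r lo hi B) : B ⊆ Finset.Icc 1 n := by
  obtain ⟨f, hf, rfl⟩ := hB
  intro x hx
  simp only [Finset.mem_map, Finset.mem_univ, true_and] at hx
  obtain ⟨j, rfl⟩ := hx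
  simp only [Finset.mem_Icc]
  exact ⟨le_trans (h1 j) (hf j).1, le_trans (hf j).2 (h2 j)⟩

lemma enum_mono {r : ℕ} (S : Finset ℕ) (h : S.card = r) :
    Monotone fun i : Fin r => (S.orderIsoOfFin h i : ℕ) :=
  fun _ _ hab => Subtype.coe_le_coe.mpr ((S.orderIsoOfFin h).monotone hab)

lemma cnt_le {n : ℕ} {X : Finset ℕ} (hX : X ⊆ Finset.Icc 1 n) (p : ℕ) :
    (X.filter (· ≤ p)).card ≤ p := by
  have hsub : X.filter (· ≤ p) ⊆ Finset.Icc 1 p := by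
    intro x hx
    simp only [Finset.mem_filter] at hx
    have := hX hx.1
    simp only [Finset.mem_Icc] at this ⊢
    omega
  calc (X.filter (· ≤ p)).card ≤ (Finset.Icc 1 p).card := Finset.card_le_card hsub
    _ = p := by rw [Nat.card_Icc]; omega

lemma cnt_full {n : ℕ} {X : Finset ℕ} (hX : X ⊆ Finset.Icc 1 n) {p : ℕ} (hp : n ≤ p) :
    (X.filter (· ≤ p)).card = X.card := by
  congr 1
  apply Finset.filter_true_of_mem
  intro x hx
  have := hX hx
  simp only [Finset.mem_Icc] at this
  omega

lemma cnt_sdiff {n : ℕ} {B : Finset ℕ} (hB : B ⊆ Finset.Icc 1 n) {p : ℕ} (hp : p ≤ n) :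
    ((Finset.Icc 1 n \ B).filter (· ≤ p)).card = p - (B.filter (· ≤ p)).card := by
  have h1 : (Finset.Icc 1 n \ B).filter (· ≤ p) = Finset.Icc 1 p \ B.filter (· ≤ p) := by
    ext x
    simp only [Finset.mem_filter, Finset.mem_sdiff, Finset.mem_Icc]
    constructor
    · rintro ⟨⟨⟨h1x, h2x⟩, hxB⟩, hxp⟩
      exact ⟨⟨h1x, hxp⟩, fun hc => hxB hc.1⟩
    · rintro ⟨⟨h1x, hxp⟩, hxB⟩
      exact ⟨⟨⟨h1x, le_trans hxp hp⟩, fun hc => hxB ⟨hc, hxp⟩⟩, hxp⟩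
  have h2 : B.filter (· ≤ p) ⊆ Finset.Icc 1 p := by
    intro x hx
    simp only [Finset.mem_filter] at hx
    have := hB hx.1
    simp only [Finset.mem_Icc] at this ⊢
    exact ⟨this.1, hx.2⟩
  rw [h1, Finset.card_sdiff_of_subset h2, Nat.card_Icc]
  omega

lemma card_le_n {n : ℕ} {X : Finset ℕ} (hX : X ⊆ Finset.Icc 1 n) : X.card ≤ n := by
  calc X.card ≤ (Finset.Icc 1 n).card := Finset.card_le_card hX
    _ = n := by rw [Nat.card_Icc]; omega

lemma card_sdiff_Icc {n : ℕ} {X : Finset ℕ} (hX : X ⊆ Finset.Icc 1 n) :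
    (Finset.Icc 1 n \ X).card = n - X.card := by
  rw [Finset.card_sdiff_of_subset hX, Nat.card_Icc]
  omega

/-- one direction of the counting duality, upper version -/
lemma dualcnt_aux {n : ℕ} {X B : Finset ℕ} (hX : X ⊆ Finset.Icc 1 n)
    (hB : B ⊆ Finset.Icc 1 n)
    (H : ∀ p, ((Finset.Icc 1 n \ X).filter (· ≤ p)).card ≤ (B.filter (· ≤ p)).card) :
    ∀ p, ((Finset.Icc 1 n \ B).filter (· ≤ p)).card ≤ (X.filter (· ≤ p)).card := by
  intro p
  rcases le_or_gt p n with hp | hp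
  · have h1 := H p
    rw [cnt_sdiff hX hp] at h1
    rw [cnt_sdiff hB hp]
    have h2 := cnt_le hB p
    have h3 := cnt_le hX p
    omega
  · have h1 := H n
    rw [cnt_sdiff hX le_rfl, cnt_full hB le_rfl, cnt_full hX le_rfl] at h1
    rw [cnt_full (Finset.sdiff_subset) (le_of_lt hp), cnt_full hX (le_of_lt hp),
      card_sdiff_Icc hB]
    omega

/-- one direction of the counting duality, lower version -/
lemma dualcnt2_aux {n : ℕ} {X B : Finset ℕ} (hX : X ⊆ Finset.Icc 1 n)
    (hB : B ⊆ Finset.Icc 1 n)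
    (H : ∀ p, (B.filter (· ≤ p)).card ≤ ((Finset.Icc 1 n \ X).filter (· ≤ p)).card) :
    ∀ p, (X.filter (· ≤ p)).card ≤ ((Finset.Icc 1 n \ B).filter (· ≤ p)).card := by
  intro p
  rcases le_or_gt p n with hp | hp
  · have h1 := H p
    rw [cnt_sdiff hX hp] at h1
    rw [cnt_sdiff hB hp]
    have h2 := cnt_le hB p
    have h3 := cnt_le hX p
    omega
  · have h1 := H n
    rw [cnt_sdiff hX le_rfl, cnt_full hB le_rfl, cnt_full hX le_rfl] at h1
    rw [cnt_full (Finset.sdiff_subset) (le_of_lt hp), cnt_full hX (le_of_lt hp),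
      card_sdiff_Icc hB]
    have h4 := card_le_n hX
    omega

/-- `M` is the lattice path matroid `M[P,Q]` on ground set `[1, m+r]`:
`P` (lower) and `Q` (upper) are encoded by their North-step position sets,
`P` never goes above `Q`, and the bases of `M` are exactly the `r`-element
transversals of the interval system determined by `P` and `Q`. -/
def IsLPMPres (m r : ℕ) (P Q : Finset ℕ) (M : Matroid ℕ) : Prop :=
  ∃ (hP : P.card = r) (hQ : Q.card = r),
    P ⊆ Finset.Icc 1 (m + r) ∧ Q ⊆ Finset.Icc 1 (m + r) ∧
    (∀ p ≤ m + r, (P.filter (· ≤ p)).card ≤ (Q.filter (· ≤ p)).card) ∧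
    M.E = ↑(Finset.Icc 1 (m + r)) ∧
    ∀ B : Finset ℕ, M.IsBase ↑B ↔
      IsTransLH r (fun i => (Q.orderIsoOfFin hQ i : ℕ)) (fun i => (P.orderIsoOfFin hP i : ℕ)) B

/-- **Lattice path matroids are closed under duality.**  If `M = M[P,Q]` is a lattice
path matroid, then its dual `M✶` (whose bases are the complements of the bases of `M`)
is again a lattice path matroid, namely the one obtained by reflecting the bounding
paths about the line `y = x`: reflecting swaps East and North steps, so the reflected
region is bounded below by the reflection of `Q` (North positions `[1,m+r] \ Q`) and
above by the reflection of `P` (North positions `[1,m+r] \ P`), and it goes from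
`(0,0)` to `(r,m)`. -/
theorem stmt6 (m r : ℕ) (P Q : Finset ℕ) (M : Matroid ℕ)
    (h : IsLPMPres m r P Q M) :
    IsLPMPres r m (Finset.Icc 1 (m + r) \ Q) (Finset.Icc 1 (m + r) \ P) M✶ := by
  obtain ⟨hP, hQ, hPs, hQs, hPQ, hE, hBase⟩ := h
  set n := m + r with hn
  simp only [IsLPMPres]
  rw [Nat.add_comm r m, ← hn]
  have hP' : (Finset.Icc 1 n \ Q).card = m := by
    rw [card_sdiff_Icc hQs, hQ]; omega
  have hQ' : (Finset.Icc 1 n \ P).card = m := by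
    rw [card_sdiff_Icc hPs, hP]; omega
  refine ⟨hP', hQ', Finset.sdiff_subset, Finset.sdiff_subset, ?_, ?_, ?_⟩
  · intro p hp
    rw [cnt_sdiff hQs hp, cnt_sdiff hPs hp]
    exact Nat.sub_le_sub_left (hPQ p hp) p
  · rw [Matroid.dual_ground, hE]
  · intro B
    rw [Matroid.dual_isBase_iff', hE, ← Finset.coe_sdiff, hBase (Finset.Icc 1 n \ B),
      Finset.coe_subset]
    rw [trans_iff _ _ (enum_mono Q hQ) (enum_mono P hP),
      trans_iff _ _ (enum_mono _ hQ') (enum_mono _ hP')]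
    constructor
    · rintro ⟨⟨hC, hb⟩, hBsub'⟩
      have hBcard : B.card = m := by
        have h1 := card_sdiff_Icc hBsub'
        have h2 := card_le_n hBsub'
        omega
      refine ⟨hBcard, ?_⟩
      have hlo := (sorted_le_iff Q _ hQ hC).1 (fun i => (hb i).1)
      have hhi := (sorted_le_iff _ P hC hP).1 (fun i => (hb i).2)
      have h1 := dualcnt_aux hBsub' hQs hlo
      have h2 := dualcnt2_aux hBsub' hPs hhi
      intro i
      exact ⟨(sorted_le_iff _ B hQ' hBcard).2 h2 i,
        (sorted_le_iff B _ hBcard hP').2 h1 i⟩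
    · rintro ⟨hBcard, hb⟩
      have hBsub' : B ⊆ Finset.Icc 1 n := by
        intro x hx
        obtain ⟨i, rfl⟩ : ∃ i, ((B.orderIsoOfFin hBcard) i : ℕ) = x :=
          ⟨(B.orderIsoOfFin hBcard).symm ⟨x, hx⟩, by simp only [OrderIso.apply_symm_apply]⟩
        have h1 := (hb i).1
        have h2 := (hb i).2
        have hm1 := Finset.sdiff_subset (((Finset.Icc 1 n \ P).orderIsoOfFin hQ') i).2
        have hm2 := Finset.sdiff_subset (((Finset.Icc 1 n \ Q).orderIsoOfFin hP') i).2
        simp only [Finset.mem_Icc] at hm1 hm2 ⊢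
        omega
      have hC : (Finset.Icc 1 n \ B).card = r := by
        rw [card_sdiff_Icc hBsub', hBcard]; omega
      have h2' := (sorted_le_iff _ B hQ' hBcard).1 (fun i => (hb i).1)
      have h1' := (sorted_le_iff B _ hBcard hP').1 (fun i => (hb i).2)
      have hloC := dualcnt_aux hQs hBsub' h1'
      have hhiC := dualcnt2_aux hPs hBsub' h2'
      refine ⟨⟨hC, fun i => ⟨?_, ?_⟩⟩, hBsub'⟩
      · exact (sorted_le_iff Q _ hQ hC).2 hloC i
      · exact (sorted_le_iff _ P hC hP).2 hhiC i
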